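/- For positive integers β and N, MoM_N(2,β) = I_{2β}(βN; N), where I_η(m;N) = ∫_{U(N)} | ∑_{j_1+⋯+j_η = m, 0 ≤ j_i ≤ N} Sc_{j_1}(A) ⋯ Sc_{j_η}(A) |² dA and Sc_n(A) are the secular coefficients defined by det(I + xA) = ∑_{n=0}^N Sc_n(A) x^n. -/

import Mathlib

open MeasureTheory Matrix

/-- The Borel σ-algebra on the unitary group `U(N)`. -/
noncomputable instance unitaryGroup.measurableSpace (N : ℕ) :
    MeasurableSpace (Matrix.unitaryGroup (Fin N) ℂ) := borel _

instance unitaryGroup.borelSpace (N : ℕ) :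
    BorelSpace (Matrix.unitaryGroup (Fin N) ℂ) := ⟨rfl⟩

/-- `P_N(A,θ) = det(I - A e^{-iθ})`, the characteristic polynomial of `A ∈ U(N)`
evaluated at the point `e^{iθ}` of the unit circle. -/
noncomputable def charPolyOnCircle (N : ℕ) (A : Matrix (Fin N) (Fin N) ℂ) (θ : ℝ) : ℂ :=
  (1 - Complex.exp (-(θ * Complex.I)) • A).det

/-- `MoM_N(k,β)`: the `k`-th moment, with respect to the measure `μ` on `U(N)`
(which in the theorems below is required to be the Haar probability measure),
of the `2β`-th moment of `|P_N(A,θ)|` over `θ ∈ [0,2π)` with uniform measure. -/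
noncomputable def MoM (N k β : ℕ) (μ : Measure (Matrix.unitaryGroup (Fin N) ℂ)) : ℝ :=
  ∫ A : Matrix.unitaryGroup (Fin N) ℂ,
    ((1 / (2 * Real.pi)) * ∫ θ in (0:ℝ)..(2 * Real.pi),
        ‖charPolyOnCircle N (A : Matrix (Fin N) (Fin N) ℂ) θ‖ ^ (2 * β)) ^ k ∂μ
/-- The `n`-th secular coefficient `Sc_n(A)`, defined by
`det(I + xA) = ∑_{n=0}^N Sc_n(A) xⁿ`. -/
noncomputable def secCoeff (N : ℕ) (A : Matrix (Fin N) (Fin N) ℂ) (n : ℕ) : ℂ :=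
  ((1 + (Polynomial.X : Polynomial ℂ) • A.map Polynomial.C).det).coeff n

/-- `I_η(m;N) = ∫_{U(N)} |∑_{j₁+⋯+j_η=m, 0 ≤ jᵢ ≤ N} Sc_{j₁}(A)⋯Sc_{j_η}(A)|² dA`. -/
noncomputable def secI (N η m : ℕ) (μ : Measure (Matrix.unitaryGroup (Fin N) ℂ)) : ℝ :=
  ∫ A : Matrix.unitaryGroup (Fin N) ℂ,
    ‖(∑ f ∈ (Fintype.piFinset fun _ : Fin η => Finset.range (N + 1)).filter
          (fun f => ∑ i, f i = m),
        ∏ i, secCoeff N (A : Matrix (Fin N) (Fin N) ℂ) (f i))‖ ^ 2 ∂μ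

-- auxiliary lemmas
open Polynomial in

lemma lem1 (N : ℕ) (A : Matrix (Fin N) (Fin N) ℂ) (x : ℂ) :
    (1 + x • A).det = ∑ n ∈ Finset.range (N+1), secCoeff N A n * x ^ n := by
  have hdeg : ((1 + (Polynomial.X : Polynomial ℂ) • A.map Polynomial.C).det).natDegree < N + 1 := by
    have := Polynomial.natDegree_det_X_add_C_le A (1 : Matrix (Fin N) (Fin N) ℂ)
    simp only [Fintype.card_fin] at this
    have h1 : ((1 : Matrix (Fin N) (Fin N) ℂ).map Polynomial.C) = 1 := by
      ext i j; by_cases h : i = j <;> simp [Matrix.one_apply, h]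
    rw [h1, add_comm] at this
    omega
  have heval : ((1 + (Polynomial.X : Polynomial ℂ) • A.map Polynomial.C).det).eval x
      = (1 + x • A).det := by
    rw [← Polynomial.coe_evalRingHom, RingHom.map_det]
    congr 1
    ext i j
    simp only [RingHom.mapMatrix_apply, Matrix.map_apply, Matrix.add_apply, Matrix.smul_apply,
      Matrix.one_apply, Matrix.map_apply, smul_eq_mul, coe_evalRingHom, eval_mul, eval_X, eval_C]
    by_cases h : i = j <;> simp [h] <;> ring
  rw [← heval, Polynomial.eval_eq_sum_range' hdeg]
  rfl

-- lemma 2 (proved in /tmp/t2)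
lemma lem2 (N : ℕ) (A : Matrix.unitaryGroup (Fin N) ℂ) (z : ℂ)
    (hz : z * (starRingEnd ℂ) z = 1) :
    (A : Matrix (Fin N) (Fin N) ℂ).det * (starRingEnd ℂ) ((1 - z • (A : Matrix (Fin N) (Fin N) ℂ)).det)
      = (-(starRingEnd ℂ) z) ^ N * (1 - z • (A : Matrix (Fin N) (Fin N) ℂ)).det := by
  set M : Matrix (Fin N) (Fin N) ℂ := (A : Matrix (Fin N) (Fin N) ℂ) with hM
  have hconj : (starRingEnd ℂ) ((1 - z • M).det)
      = (1 - (starRingEnd ℂ) z • Mᴴ).det := by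
    rw [RingHom.map_det]
    rw [show (starRingEnd ℂ).mapMatrix (1 - z • M) = (1 - (starRingEnd ℂ) z • Mᴴ)ᵀ by
      ext i j
      simp [Matrix.one_apply, Matrix.conjTranspose_apply, Matrix.transpose_apply, apply_ite,
        mul_comm, eq_comm]]
    rw [Matrix.det_transpose]
  rw [hconj, ← Matrix.det_mul, Matrix.mul_sub, Matrix.mul_one, Matrix.mul_smul,
    (show M * Mᴴ = 1 from A.2.2)]
  have : M - (starRingEnd ℂ) z • (1 : Matrix (Fin N) (Fin N) ℂ)
      = (-(starRingEnd ℂ) z) • (1 - z • M) := by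
    rw [smul_sub, smul_smul, neg_mul, mul_comm _ z, hz]
    simp [sub_eq_add_neg, add_comm]
  rw [this, Matrix.det_smul, Fintype.card_fin]

lemma lem3 (k : ℤ) :
    (∫ θ in (0:ℝ)..(2 * Real.pi), Complex.exp ((k : ℂ) * Complex.I * θ))
      = if k = 0 then (2 * Real.pi : ℂ) else 0 := by
  split_ifs with h
  · simp [h]
  · have hc : (k : ℂ) * Complex.I ≠ 0 := by
      simp [Complex.ext_iff, h]
    rw [integral_exp_mul_complex hc]
    have : Complex.exp ((k:ℂ) * Complex.I * (2 * Real.pi)) = 1 := by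
      rw [show ((k:ℂ) * Complex.I * (2 * Real.pi)) = (k : ℤ) * (2 * Real.pi * Complex.I) by
        push_cast; ring]
      exact Complex.exp_int_mul_two_pi_mul_I k
    simp [this]

lemma det_conj_mul (N : ℕ) (A : Matrix.unitaryGroup (Fin N) ℂ) :
    (A : Matrix (Fin N) (Fin N) ℂ).det * (starRingEnd ℂ) ((A : Matrix (Fin N) (Fin N) ℂ).det) = 1 := by
  have h := A.2.2
  have : ((A : Matrix (Fin N) (Fin N) ℂ) * (A : Matrix (Fin N) (Fin N) ℂ)ᴴ).det = 1 := by
    rw [(show (A : Matrix (Fin N) (Fin N) ℂ) * (A : Matrix (Fin N) (Fin N) ℂ)ᴴ = 1 from h)]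
    simp
  rwa [Matrix.det_mul, Matrix.det_conjTranspose] at this

lemma abs_det (N : ℕ) (A : Matrix.unitaryGroup (Fin N) ℂ) :
    ‖(A : Matrix (Fin N) (Fin N) ℂ).det‖ = 1 := by
  have h := det_conj_mul N A
  rw [Complex.mul_conj] at h
  have : Complex.normSq ((A : Matrix (Fin N) (Fin N) ℂ).det) = 1 := by exact_mod_cast h
  rw [← Complex.sq_norm] at this
  nlinarith [norm_nonneg ((A : Matrix (Fin N) (Fin N) ℂ).det)]

-- main pointwise lemma
lemma pointwise (N β : ℕ) (A : Matrix.unitaryGroup (Fin N) ℂ) :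
    ((1 / (2 * Real.pi)) * ∫ θ in (0:ℝ)..(2 * Real.pi),
        ‖charPolyOnCircle N (A : Matrix (Fin N) (Fin N) ℂ) θ‖ ^ (2 * β)) ^ 2
      = ‖(∑ f ∈ (Fintype.piFinset fun _ : Fin (2*β) => Finset.range (N + 1)).filter
              (fun f => ∑ i, f i = β * N),
            ∏ i, secCoeff N (A : Matrix (Fin N) (Fin N) ℂ) (f i))‖ ^ 2 := by
  set M : Matrix (Fin N) (Fin N) ℂ := (A : Matrix (Fin N) (Fin N) ℂ) with hM
  set b : ℂ := ∑ f ∈ (Fintype.piFinset fun _ : Fin (2*β) => Finset.range (N + 1)).filter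
      (fun f => ∑ i, f i = β * N), ∏ i, secCoeff N M (f i) with hb
  set c : ℂ := (starRingEnd ℂ) M.det with hc
  -- pointwise expansion of the integrand as a ℂ-valued function
  have key : ∀ θ : ℝ, ((‖charPolyOnCircle N M θ‖ ^ (2 * β) : ℝ) : ℂ)
      = ∑ f ∈ Fintype.piFinset fun _ : Fin (2*β) => Finset.range (N + 1),
          (c ^ β * ((-1:ℂ)) ^ (N*β + ∑ i, f i) * ∏ i, secCoeff N M (f i)) *
            Complex.exp ((((((N*β : ℕ) : ℤ) - ((∑ i, f i : ℕ) : ℤ)) : ℤ) : ℂ) * Complex.I * θ) := by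
    intro θ
    set z : ℂ := Complex.exp (-(θ * Complex.I)) with hz
    have hzc : (starRingEnd ℂ) z = Complex.exp (θ * Complex.I) := by
      rw [hz, ← Complex.exp_conj]
      congr 1
      simp [Complex.ext_iff]
    have hz1 : z * (starRingEnd ℂ) z = 1 := by
      rw [hzc, hz, ← Complex.exp_add]
      simp
    set P : ℂ := charPolyOnCircle N M θ with hP
    -- step B : coe of abs power
    have hB : ((‖P‖ ^ (2 * β) : ℝ) : ℂ) = P ^ β * ((starRingEnd ℂ) P) ^ β := by
      have : ‖P‖ ^ (2 * β) = (Complex.normSq P) ^ β := by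
        rw [pow_mul, Complex.sq_norm]
      rw [this]
      push_cast
      rw [← Complex.mul_conj, mul_pow]
    -- step C : functional equation for powers
    have hPdet : M.det * (starRingEnd ℂ) P = (-(starRingEnd ℂ) z) ^ N * P := by
      exact lem2 N A z hz1
    have hCpow : ((starRingEnd ℂ) P) ^ β = c ^ β * ((-(starRingEnd ℂ) z) ^ N) ^ β * P ^ β := by
      have h1 : (starRingEnd ℂ) P = c * ((-(starRingEnd ℂ) z) ^ N * P) := by
        rw [← hPdet, hc, ← mul_assoc, mul_comm _ M.det, det_conj_mul N A, one_mul]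
      rw [h1]
      ring
    -- expansion of P as polynomial in (-z)
    have hPsum : P = ∑ n ∈ Finset.range (N+1), secCoeff N M n * (-z) ^ n := by
      rw [hP, charPolyOnCircle, ← lem1 N M (-z)]
      congr 1
      rw [sub_eq_add_neg, neg_smul]
    -- expand P^(2β)
    have hPpow : P ^ (2*β) = ∑ f ∈ Fintype.piFinset fun _ : Fin (2*β) => Finset.range (N + 1),
        (∏ i, secCoeff N M (f i)) * (-z) ^ (∑ i, f i) := by
      rw [hPsum, ← Fin.prod_const (2*β), Finset.prod_univ_sum]
      refine Finset.sum_congr rfl fun f _ => ?_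
      rw [Finset.prod_mul_distrib, Finset.prod_pow_eq_pow_sum]
    have hexp : ∀ a b : ℕ, ((starRingEnd ℂ) z) ^ a * z ^ b
        = Complex.exp ((((((a : ℕ) : ℤ) - ((b : ℕ) : ℤ)) : ℤ) : ℂ) * Complex.I * θ) := by
      intro a b'
      rw [hzc, hz, ← Complex.exp_nat_mul, ← Complex.exp_nat_mul, ← Complex.exp_add]
      congr 1
      push_cast
      ring
    calc ((‖P‖ ^ (2 * β) : ℝ) : ℂ)
        = c ^ β * ((-(starRingEnd ℂ) z) ^ N) ^ β * P ^ (2*β) := by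
          rw [hB, hCpow]; ring
      _ = _ := by
          rw [hPpow, Finset.mul_sum]
          refine Finset.sum_congr rfl fun f _ => ?_
          rw [← hexp (N*β) (∑ i, f i)]
          rw [show (-(starRingEnd ℂ) z) ^ N = (-1:ℂ)^N * ((starRingEnd ℂ) z)^N by rw [neg_pow],
            show (-z : ℂ) ^ (∑ i, f i) = (-1:ℂ)^(∑ i, f i) * z ^ (∑ i, f i) by rw [neg_pow]]
          rw [mul_pow, ← pow_mul, ← pow_mul]
          ring
  -- integrate
  have hInt : (((∫ θ in (0:ℝ)..(2 * Real.pi),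
      ‖charPolyOnCircle N M θ‖ ^ (2 * β)) : ℝ) : ℂ)
      = (2 * Real.pi) * (c ^ β * b) := by
    rw [← intervalIntegral.integral_ofReal]
    rw [intervalIntegral.integral_congr (g := fun θ =>
      ∑ f ∈ Fintype.piFinset fun _ : Fin (2*β) => Finset.range (N + 1),
          (c ^ β * ((-1:ℂ)) ^ (N*β + ∑ i, f i) * ∏ i, secCoeff N M (f i)) *
            Complex.exp ((((((N*β : ℕ) : ℤ) - ((∑ i, f i : ℕ) : ℤ)) : ℤ) : ℂ) * Complex.I * θ))
      (fun θ _ => key θ)]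
    rw [intervalIntegral.integral_finset_sum (fun f _ => by
      apply Continuous.intervalIntegrable
      exact continuous_const.mul ((Complex.continuous_exp.comp (by continuity))))]
    have : ∀ f ∈ Fintype.piFinset fun _ : Fin (2*β) => Finset.range (N + 1),
        (∫ θ in (0:ℝ)..(2 * Real.pi),
          (c ^ β * ((-1:ℂ)) ^ (N*β + ∑ i, f i) * ∏ i, secCoeff N M (f i)) *
            Complex.exp ((((((N*β : ℕ) : ℤ) - ((∑ i, f i : ℕ) : ℤ)) : ℤ) : ℂ) * Complex.I * θ))
        = if (∑ i, f i) = β * N then (2 * Real.pi) * (c ^ β * ∏ i, secCoeff N M (f i)) else 0 := by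
      intro f _
      have hcomm : N*β = β*N := Nat.mul_comm N β
      rw [intervalIntegral.integral_const_mul, lem3]
      split_ifs with h1 h2 h2
      · rw [h2] at h1 ⊢
        rw [show N * β + β * N = 2 * (β * N) by ring, pow_mul]
        norm_num
        try ring
      · exfalso; omega
      · exfalso; omega
      · simp
    rw [Finset.sum_congr rfl this, ← Finset.sum_filter, ← Finset.mul_sum, ← Finset.mul_sum, hb]
  -- conclude
  have hπ : (2 * Real.pi : ℝ) ≠ 0 := by positivity
  have hr : ((1 / (2 * Real.pi) * ∫ θ in (0:ℝ)..(2 * Real.pi),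
      ‖charPolyOnCircle N M θ‖ ^ (2 * β) : ℝ) : ℂ) = c ^ β * b := by
    push_cast
    rw [hInt]
    have hπ' : ((2 * Real.pi : ℝ) : ℂ) ≠ 0 := by exact_mod_cast hπ
    push_cast at hπ' ⊢
    field_simp
  have habs1 : ‖c ^ β * b‖ = ‖b‖ := by
    rw [norm_mul, norm_pow, hc, Complex.norm_conj, abs_det N A, one_pow, one_mul]
  calc ((1 / (2 * Real.pi)) * ∫ θ in (0:ℝ)..(2 * Real.pi),
        ‖charPolyOnCircle N M θ‖ ^ (2 * β)) ^ 2
      = |(1 / (2 * Real.pi)) * ∫ θ in (0:ℝ)..(2 * Real.pi),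
        ‖charPolyOnCircle N M θ‖ ^ (2 * β)| ^ 2 := (sq_abs _).symm
    _ = ‖(((1 / (2 * Real.pi) * ∫ θ in (0:ℝ)..(2 * Real.pi),
        ‖charPolyOnCircle N M θ‖ ^ (2 * β) : ℝ) : ℂ))‖ ^ 2 := by
        rw [Complex.norm_real, Real.norm_eq_abs]
    _ = ‖b‖ ^ 2 := by rw [hr, habs1]


/-- For positive integers `β` and `N`, `MoM_N(2,β) = I_{2β}(βN; N)`. -/
theorem MoM_two_eq_secI (N β : ℕ) (hN : 1 ≤ N) (hβ : 1 ≤ β)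
    (μ : Measure (Matrix.unitaryGroup (Fin N) ℂ))
    [μ.IsHaarMeasure] [IsProbabilityMeasure μ] :
    MoM N 2 β μ = secI N (2 * β) (β * N) μ := by
  rw [MoM, secI]
  exact integral_congr_ae (Filter.Eventually.of_forall fun A => pointwise N β A)
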